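/- Let f: (X,B₁,b₁) → (Y,B₂,b₂) be a coarse proximity isomorphism with coarse inverse g. Then for all A, B ⊆ X: A b₁ B if and only if f(A) b₂ f(B). -/
import Mathlib


open Set

universe u
variable {X : Type u}

/-- The axioms of a coarse proximity structure: a bornology `B` (contains singletons,
closed under subsets and finite unions) and a relation `b` satisfying symmetry,
unboundedness of related sets, relatedness of sets with unbounded intersection,
the union axiom, and the strong axiom. -/
structure IsCoarseProximity (B : Set (Set X)) (b : Set X → Set X → Prop) : Prop where
  singleton_mem : ∀ x : X, {x} ∈ B
  subset_mem : ∀ A C : Set X, A ∈ B → C ⊆ A → C ∈ B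
  union_mem : ∀ A C : Set X, A ∈ B → C ∈ B → A ∪ C ∈ B
  symm : ∀ A C : Set X, b A C → b C A
  unbounded_of_rel : ∀ A C : Set X, b A C → A ∉ B ∧ C ∉ B
  rel_of_inter : ∀ A C : Set X, A ∩ C ∉ B → b A C
  union_iff : ∀ A C D : Set X, b (A ∪ C) D ↔ b A D ∨ b C D
  strong : ∀ A C : Set X, ¬ b A C → ∃ E : Set X, ¬ b A E ∧ ¬ b (univ \ E) C

/-- A coarse proximity space structure on `X`. -/
structure CoarseProximity (X : Type u) where
  B : Set (Set X)
  b : Set X → Set X → Prop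
  isCP : IsCoarseProximity B b

/-- The weak asymptotic resemblance induced by a coarse proximity. -/
def phi (cp : CoarseProximity X) (A C : Set X) : Prop :=
  (∀ C' ⊆ C, C' ∉ cp.B → cp.b A C') ∧ (∀ A' ⊆ A, A' ∉ cp.B → cp.b A' C)

variable {Y : Type u}

/-- A coarse proximity map: sends bounded sets to bounded sets and preserves `b`. -/
def IsCPMap (cp1 : CoarseProximity X) (cp2 : CoarseProximity Y) (f : X → Y) : Prop :=
  (∀ A ∈ cp1.B, f '' A ∈ cp2.B) ∧ ∀ A C : Set X, cp1.b A C → cp2.b (f '' A) (f '' C)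

/-- Two maps into a coarse proximity space are close if images of every subset
are `φ`-related. -/
def CloseMaps {Z : Type u} (cp : CoarseProximity Y) (f g : Z → Y) : Prop :=
  ∀ A : Set Z, phi cp (f '' A) (g '' A)

/-- `b` is monotone in the second argument. -/
lemma b_mono {cp : CoarseProximity X} {A D E : Set X} (h : cp.b A D) (hDE : D ⊆ E) :
    cp.b A E := by
  have : cp.b (D ∪ (E \ D)) A := (cp.isCP.union_iff D (E \ D) A).mpr (Or.inl (cp.isCP.symm _ _ h))
  have hE : D ∪ (E \ D) = E := Set.union_diff_cancel' (le_refl D) hDE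
  exact cp.isCP.symm _ _ (hE ▸ this)

/-- If `A φ B` and `C b A` then `C b B`. -/
lemma b_of_phi {cp : CoarseProximity X} {A B C : Set X} (hphi : phi cp A B)
    (h : cp.b C A) : cp.b C B := by
  by_contra hcb
  obtain ⟨E, hCE, hEB⟩ := cp.isCP.strong C B hcb
  have hsplit : cp.b C (A ∩ E) ∨ cp.b C (A \ E) := by
    have : cp.b ((A ∩ E) ∪ (A \ E)) C := by
      rw [Set.inter_union_diff]; exact cp.isCP.symm _ _ h
    rcases (cp.isCP.union_iff _ _ _).mp this with h1 | h2
    · exact Or.inl (cp.isCP.symm _ _ h1)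
    · exact Or.inr (cp.isCP.symm _ _ h2)
  rcases hsplit with h1 | h2
  · exact hCE (b_mono h1 Set.inter_subset_right)
  · have hub : A \ E ∉ cp.B := (cp.isCP.unbounded_of_rel _ _ (cp.isCP.symm _ _ h2)).1
    have : cp.b (A \ E) B := hphi.2 (A \ E) Set.diff_subset hub
    exact hEB (cp.isCP.symm _ _ (b_mono (cp.isCP.symm _ _ this)
      (fun x hx => ⟨Set.mem_univ x, hx.2⟩)))

/-- a coarse proximity isomorphism `f` (with coarse inverse `g`)
satisfies `A b₁ B ↔ f(A) b₂ f(B)`. -/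
theorem iso_preserves_b {Y : Type u} (cp1 : CoarseProximity X) (cp2 : CoarseProximity Y)
    (f : X → Y) (g : Y → X) (hf : IsCPMap cp1 cp2 f) (hg : IsCPMap cp2 cp1 g)
    (hgf : CloseMaps cp1 (g ∘ f) id) (hfg : CloseMaps cp2 (f ∘ g) id)
    (A C : Set X) : cp1.b A C ↔ cp2.b (f '' A) (f '' C) := by
  constructor
  · exact hf.2 A C
  · intro h
    have h1 : cp1.b (g '' (f '' A)) (g '' (f '' C)) := hg.2 _ _ h
    have hA : g '' (f '' A) = (g ∘ f) '' A := (Set.image_comp g f A).symm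
    have hC : g '' (f '' C) = (g ∘ f) '' C := (Set.image_comp g f C).symm
    rw [hA, hC] at h1
    have hphiA : phi cp1 ((g ∘ f) '' A) A := by simpa using hgf A
    have hphiC : phi cp1 ((g ∘ f) '' C) C := by simpa using hgf C
    have h2 : cp1.b ((g ∘ f) '' C) A := b_of_phi hphiA (cp1.isCP.symm _ _ h1)
    exact b_of_phi hphiC (cp1.isCP.symm _ _ h2)
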